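/- For 1 < p < n, a, b > 0 with n·((n−p)/(p−1))^{p−1}·a·b^{p−1} = 1, and x₀ ∈ ℝⁿ, the Aubin–Talenti bubble u(x) = (a + b|x − x₀|^{p/(p−1)})^{−(n−p)/p} satisfies −Δ_p u = u^{np/(n−p) − 1} on ℝⁿ \ {x₀}. -/

import Mathlib

/-- The `p`-Laplacian `Δ_p f = div(|∇f|^{p-2} ∇f)` on `ℝⁿ`, written coordinatewise. -/
noncomputable def pLap (n : ℕ) (p : ℝ) (f : EuclideanSpace ℝ (Fin n) → ℝ)
    (x : EuclideanSpace ℝ (Fin n)) : ℝ :=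
  ∑ i, fderiv ℝ (fun y => ‖gradient f y‖ ^ (p - 2) * gradient f y i) x
    (EuclideanSpace.single i 1)

open Real

lemma AT.sq_rpow (r e : ℝ) (hr : 0 ≤ r) : ((r ^ 2 : ℝ)) ^ e = r ^ (2 * e) := by
  rw [← Real.rpow_natCast r 2, ← Real.rpow_mul hr]
  norm_num

lemma AT.hasFDerivAt_radial {n : ℕ} (a b e t : ℝ) (ha : 0 < a) (hb : 0 < b)
    (x₀ y : EuclideanSpace ℝ (Fin n)) (hy : y ≠ x₀) :
    HasFDerivAt (fun z : EuclideanSpace ℝ (Fin n) => (a + b * ((‖z - x₀‖ ^ 2 : ℝ) ^ e)) ^ t)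
      ((t * (a + b * ((‖y - x₀‖ ^ 2 : ℝ) ^ e)) ^ (t - 1) *
          (b * (e * (‖y - x₀‖ ^ 2 : ℝ) ^ (e - 1))) * 2) • innerSL ℝ (y - x₀)) y := by
  have hyne : y - x₀ ≠ 0 := sub_ne_zero.mpr hy
  have hR : (0:ℝ) < ‖y - x₀‖ ^ 2 := by
    have := norm_pos_iff.mpr hyne; positivity
  have hφ : (0:ℝ) < a + b * (‖y - x₀‖ ^ 2 : ℝ) ^ e := by positivity
  have h0 : HasFDerivAt (fun z : EuclideanSpace ℝ (Fin n) => z - x₀)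
      (ContinuousLinearMap.id ℝ _) y := (hasFDerivAt_id y).sub_const x₀
  have h1 := h0.norm_sq
  have h2 := h1.rpow_const (p := e) (Or.inl hR.ne')
  have h3 := (h2.const_mul b).const_add a
  have h5 := h3.rpow_const (p := t) (Or.inl hφ.ne')
  refine h5.congr_fderiv ?_
  ext v
  simp only [ContinuousLinearMap.smul_apply, ContinuousLinearMap.comp_id, innerSL_apply_apply,
    ContinuousLinearMap.coe_smul', Pi.smul_apply, smul_eq_mul]
  ring

lemma AT.gradient_eq {n : ℕ} (a b q m : ℝ) (ha : 0 < a) (hb : 0 < b)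
    (x₀ y : EuclideanSpace ℝ (Fin n)) (hy : y ≠ x₀) :
    gradient (fun z : EuclideanSpace ℝ (Fin n) =>
        (a + b * ((‖z - x₀‖ ^ 2 : ℝ) ^ (q / 2))) ^ (-m)) y =
      (-(m * b * q * ((a + b * ((‖y - x₀‖ ^ 2 : ℝ) ^ (q / 2))) ^ (-m - 1)
          * ((‖y - x₀‖ ^ 2 : ℝ) ^ (q / 2 - 1))))) • (y - x₀) := by
  have h := AT.hasFDerivAt_radial a b (q / 2) (-m) ha hb x₀ y hy
  refine HasGradientAt.gradient ?_
  rw [hasGradientAt_iff_hasFDerivAt]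
  refine h.congr_fderiv ?_
  ext v
  simp only [InnerProductSpace.toDual_apply_apply, real_inner_smul_left,
    ContinuousLinearMap.smul_apply, innerSL_apply_apply, smul_eq_mul]
  ring

lemma AT.scalar (p q m s M C b r φ : ℝ) (hp1 : 1 < p)
    (hb : 0 < b) (hm0 : 0 < m) (hq0 : 0 < q) (hr : 0 < r) (hφ : 0 < φ)
    (hqp : (q - 1) * (p - 1) = 1) (hs : s = (m + 1) * (p - 1))
    (hM : M = m * b * q) (hC : C = M ^ (p - 1)) :
    (m * b * q * (φ ^ (-m - 1) * ((r ^ 2 : ℝ) ^ (q / 2 - 1))) * r) ^ (p - 2)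
      * (m * b * q * (φ ^ (-m - 1) * ((r ^ 2 : ℝ) ^ (q / 2 - 1))))
      = C * φ ^ (-s) := by
  subst hM hC hs
  have h1 : ((r ^ 2 : ℝ)) ^ (q / 2 - 1) = r ^ (q - 2) := by
    rw [AT.sq_rpow _ _ hr.le]; congr 1; ring
  rw [h1]
  have e1 : m * b * q * (φ ^ (-m - 1) * r ^ (q - 2)) * r
      = (m * b * q) * (φ ^ (-m - 1) * r ^ (q - 1)) := by
    rw [show q - 1 = q - 2 + 1 by ring, Real.rpow_add hr, Real.rpow_one]; ring
  have esplit : (φ ^ (-m - 1) * r ^ (q - 1)) ^ (p - 2)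
      = φ ^ ((-m - 1) * (p - 2)) * r ^ ((q - 1) * (p - 2)) := by
    rw [Real.mul_rpow (by positivity) (by positivity),
      ← Real.rpow_mul hφ.le, ← Real.rpow_mul hr.le]
  rw [e1, Real.mul_rpow (by positivity) (by positivity), esplit]
  have eM : (m * b * q) ^ (p - 1) = (m * b * q) ^ (p - 2) * (m * b * q) := by
    rw [show p - 1 = p - 2 + 1 by ring, Real.rpow_add (by positivity), Real.rpow_one]
  have eφ : φ ^ ((-m - 1) * (p - 2)) * φ ^ (-m - 1) = φ ^ (-((m + 1) * (p - 1))) := by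
    rw [← Real.rpow_add hφ]; congr 1; ring
  have er : r ^ ((q - 1) * (p - 2)) * r ^ (q - 2) = 1 := by
    rw [← Real.rpow_add hr, show (q - 1) * (p - 2) + (q - 2) = 0 by linear_combination hqp,
      Real.rpow_zero]
  calc (m * b * q) ^ (p - 2) * (φ ^ ((-m - 1) * (p - 2)) * r ^ ((q - 1) * (p - 2)))
        * (m * b * q * (φ ^ (-m - 1) * r ^ (q - 2)))
      = ((m * b * q) ^ (p - 2) * (m * b * q)) * ((φ ^ ((-m - 1) * (p - 2)) * φ ^ (-m - 1))
        * (r ^ ((q - 1) * (p - 2)) * r ^ (q - 2))) := by ring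
    _ = (m * b * q) ^ (p - 1) * φ ^ (-((m + 1) * (p - 1))) := by
        rw [eφ, er, ← eM, mul_one]

lemma AT.main {n : ℕ} (p a b : ℝ) (hp1 : 1 < p) (hpn : p < (n:ℝ)) (ha : 0 < a) (hb : 0 < b)
    (hab : (n : ℝ) * (((n : ℝ) - p) / (p - 1)) ^ (p - 1) * a * b ^ (p - 1) = 1)
    (x₀ x : EuclideanSpace ℝ (Fin n)) (hx : x ≠ x₀) :
    -pLap n p (fun y => (a + b * ‖y - x₀‖ ^ (p / (p - 1))) ^ (-(((n : ℝ) - p) / p))) x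
      = ((a + b * ‖x - x₀‖ ^ (p / (p - 1))) ^ (-(((n : ℝ) - p) / p)))
          ^ ((n : ℝ) * p / ((n : ℝ) - p) - 1) := by
  have hp0 : (0:ℝ) < p := by linarith
  have hp1' : (0:ℝ) < p - 1 := by linarith
  have hnp : (0:ℝ) < (n:ℝ) - p := by linarith
  have hn0 : (0:ℝ) < (n:ℝ) := by linarith
  set q : ℝ := p / (p - 1) with hq
  set m : ℝ := ((n:ℝ) - p) / p with hm
  set s : ℝ := (m + 1) * (p - 1) with hs
  have hq0 : 0 < q := by positivity
  have hm0 : 0 < m := by positivity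
  have hqp : (q - 1) * (p - 1) = 1 := by rw [hq]; field_simp; ring
  set M : ℝ := m * b * q with hM
  have hM0 : 0 < M := by positivity
  set C : ℝ := M ^ (p - 1) with hC
  have hC0 : 0 < C := by positivity
  set F : EuclideanSpace ℝ (Fin n) → ℝ :=
    fun y => (a + b * ((‖y - x₀‖ ^ 2 : ℝ) ^ (q / 2))) ^ (-m) with hF
  have hueq : (fun y : EuclideanSpace ℝ (Fin n) =>
      (a + b * ‖y - x₀‖ ^ q) ^ (-m)) = F := by
    funext y
    rw [hF]
    congr 2
    rw [AT.sq_rpow _ _ (norm_nonneg _)]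
    congr 1
    ring
  have hW : ∀ (y : EuclideanSpace ℝ (Fin n)), y ≠ x₀ → ∀ i : Fin n,
      ‖gradient F y‖ ^ (p - 2) * gradient F y i
        = (-C * ((a + b * ((‖y - x₀‖ ^ 2 : ℝ) ^ (q / 2))) ^ (-s))) * (y i - x₀ i) := by
    intro y hy i
    have hyne : y - x₀ ≠ 0 := sub_ne_zero.mpr hy
    have hr : (0:ℝ) < ‖y - x₀‖ := norm_pos_iff.mpr hyne
    have hφ : (0:ℝ) < a + b * ((‖y - x₀‖ ^ 2 : ℝ) ^ (q / 2)) := by positivity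
    have hgrad := AT.gradient_eq a b q m ha hb x₀ y hy
    rw [← hF] at hgrad
    rw [hgrad, norm_smul, Real.norm_eq_abs, abs_neg, abs_of_pos (by positivity),
      PiLp.smul_apply, PiLp.sub_apply, smul_eq_mul]
    have hkey := AT.scalar p q m s M C b ‖y - x₀‖
      (a + b * ((‖y - x₀‖ ^ 2 : ℝ) ^ (q / 2))) hp1 hb hm0 hq0 hr hφ hqp hs hM hC
    linear_combination (-(y i - x₀ i)) * hkey
  have hxne : x - x₀ ≠ 0 := sub_ne_zero.mpr hx
  have hr : (0:ℝ) < ‖x - x₀‖ := norm_pos_iff.mpr hxne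
  have hR : (0:ℝ) < ‖x - x₀‖ ^ 2 := by positivity
  have hφ : (0:ℝ) < a + b * ((‖x - x₀‖ ^ 2 : ℝ) ^ (q / 2)) := by positivity
  have hev : ∀ᶠ y in nhds x, y ≠ x₀ :=
    IsOpen.eventually_mem isOpen_compl_singleton hx
  set γ : ℝ := (-C) * ((-s) * (a + b * ((‖x - x₀‖ ^ 2 : ℝ) ^ (q / 2))) ^ (-s - 1) *
      (b * ((q / 2) * ((‖x - x₀‖ ^ 2 : ℝ) ^ (q / 2 - 1)))) * 2) with hγ
  have hfd : ∀ i : Fin n,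
      fderiv ℝ (fun y => ‖gradient F y‖ ^ (p - 2) * gradient F y i) x (EuclideanSpace.single i 1)
        = (-C * ((a + b * ((‖x - x₀‖ ^ 2 : ℝ) ^ (q / 2))) ^ (-s)))
            + γ * ((x i - x₀ i) * (x i - x₀ i)) := by
    intro i
    have hA : HasFDerivAt (fun y : EuclideanSpace ℝ (Fin n) =>
        -C * ((a + b * ((‖y - x₀‖ ^ 2 : ℝ) ^ (q / 2))) ^ (-s)))
        (γ • innerSL ℝ (x - x₀)) x := by
      have h := (AT.hasFDerivAt_radial a b (q / 2) (-s) ha hb x₀ x hx).const_mul (-C)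
      rw [hγ, ← smul_smul]
      exact h
    have hB : HasFDerivAt (fun y : EuclideanSpace ℝ (Fin n) => y i - x₀ i)
        (PiLp.proj 2 (fun _ : Fin n => ℝ) i : EuclideanSpace ℝ (Fin n) →L[ℝ] ℝ) x := by
      have h := (PiLp.proj 2 (fun _ : Fin n => ℝ) i :
        EuclideanSpace ℝ (Fin n) →L[ℝ] ℝ).hasFDerivAt (x := x)
      exact h.sub_const (x₀ i)
    have hAB := hA.mul hB
    have heq : (fun y => ‖gradient F y‖ ^ (p - 2) * gradient F y i) =ᶠ[nhds x]
        (fun y => (-C * ((a + b * ((‖y - x₀‖ ^ 2 : ℝ) ^ (q / 2))) ^ (-s))) * (y i - x₀ i)) :=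
      hev.mono (fun y hy => hW y hy i)
    rw [heq.fderiv_eq, (show HasFDerivAt (fun y : EuclideanSpace ℝ (Fin n) =>
      (-C * ((a + b * ((‖y - x₀‖ ^ 2 : ℝ) ^ (q / 2))) ^ (-s))) * (y i - x₀ i)) _ x from hAB).fderiv]
    simp only [ContinuousLinearMap.add_apply, ContinuousLinearMap.smul_apply,
      PiLp.proj_apply, innerSL_apply_apply, EuclideanSpace.single_apply, if_pos rfl,
      if_true, smul_eq_mul, real_inner_comm]
    rw [EuclideanSpace.inner_single_left]
    simp only [starRingEnd_apply, star_trivial, PiLp.sub_apply, one_mul]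
    ring
  have hsum : ∑ i, ((x i : ℝ) - x₀ i) * (x i - x₀ i) = ‖x - x₀‖ ^ 2 := by
    rw [← real_inner_self_eq_norm_sq, PiLp.inner_apply]
    simp [PiLp.sub_apply, sq]
  have hplap : pLap n p F x
      = (n : ℝ) * (-C * ((a + b * ((‖x - x₀‖ ^ 2 : ℝ) ^ (q / 2))) ^ (-s)))
          + γ * ‖x - x₀‖ ^ 2 := by
    simp only [pLap]
    rw [Finset.sum_congr rfl (fun i _ => hfd i), Finset.sum_add_distrib,
      Finset.sum_const, Finset.card_univ, Fintype.card_fin, ← Finset.mul_sum, hsum]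
    simp [nsmul_eq_mul]
  have hux : (a + b * ‖x - x₀‖ ^ q) ^ (-m)
      = (a + b * ((‖x - x₀‖ ^ 2 : ℝ) ^ (q / 2))) ^ (-m) := by
    have h := congrFun hueq x
    simpa [hF] using h
  rw [hueq, hplap, hux]
  have hsq : s * q = (n : ℝ) := by rw [hs, hm, hq]; field_simp; ring
  have hC1 : (n : ℝ) * a * C = 1 := by
    have hMe : M = (((n:ℝ) - p) / (p - 1)) * b := by rw [hM, hm, hq]; field_simp
    rw [hC, hMe, Real.mul_rpow (by positivity) hb.le]
    linear_combination hab
  have hP2 : ((‖x - x₀‖ ^ 2 : ℝ)) ^ (q / 2 - 1) * (‖x - x₀‖ ^ 2)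
      = ((‖x - x₀‖ ^ 2 : ℝ)) ^ (q / 2) := by
    have h := Real.rpow_add hR (q / 2 - 1) 1
    rw [Real.rpow_one] at h
    rw [← h]; congr 1; ring
  have hφs : (a + b * ((‖x - x₀‖ ^ 2 : ℝ) ^ (q / 2))) ^ (-s)
      = (a + b * ((‖x - x₀‖ ^ 2 : ℝ) ^ (q / 2))) ^ (-s - 1)
        * (a + b * ((‖x - x₀‖ ^ 2 : ℝ) ^ (q / 2))) := by
    have h := Real.rpow_add hφ (-s - 1) 1
    rw [Real.rpow_one] at h
    rw [← h]; congr 1; ring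
  have hmE : ((a + b * ((‖x - x₀‖ ^ 2 : ℝ) ^ (q / 2))) ^ (-m)) ^ ((n:ℝ) * p / ((n:ℝ) - p) - 1)
      = (a + b * ((‖x - x₀‖ ^ 2 : ℝ) ^ (q / 2))) ^ (-s - 1) := by
    rw [← Real.rpow_mul hφ.le]
    congr 1
    rw [hs, hm]
    field_simp
    ring
  rw [hmE, hγ, hφs]
  linear_combination ((a + b * ((‖x - x₀‖ ^ 2 : ℝ) ^ (q / 2))) ^ (-s - 1)) * hC1
    - C * ((a + b * ((‖x - x₀‖ ^ 2 : ℝ) ^ (q / 2))) ^ (-s - 1)) * b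
        * ((‖x - x₀‖ ^ 2 : ℝ) ^ (q / 2)) * hsq
    - C * ((a + b * ((‖x - x₀‖ ^ 2 : ℝ) ^ (q / 2))) ^ (-s - 1)) * b * s * q * hP2

/-- for `1 < p < n` and `a, b > 0` with
`n ((n-p)/(p-1))^{p-1} a b^{p-1} = 1`, the Aubin–Talenti bubble
`u(x) = (a + b |x - x₀|^{p/(p-1)})^{-(n-p)/p}` satisfies
`-Δ_p u = u^{np/(n-p)-1}` on `ℝⁿ \ {x₀}`. -/
theorem aubin_talenti_solves (n : ℕ) (p : ℝ) (hp1 : 1 < p) (hpn : p < n)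
    (a b : ℝ) (ha : 0 < a) (hb : 0 < b)
    (hab : (n : ℝ) * (((n : ℝ) - p) / (p - 1)) ^ (p - 1) * a * b ^ (p - 1) = 1)
    (x₀ : EuclideanSpace ℝ (Fin n)) :
    let u : EuclideanSpace ℝ (Fin n) → ℝ :=
      fun y => (a + b * ‖y - x₀‖ ^ (p / (p - 1))) ^ (-(((n : ℝ) - p) / p))
    ∀ x, x ≠ x₀ → -pLap n p u x = u x ^ ((n : ℝ) * p / ((n : ℝ) - p) - 1) := by
  intro u x hx
  exact AT.main p a b hp1 hpn ha hb hab x₀ x hx
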